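/- Let G = (S, C, R) be a reaction network with a set of intermediate species Y ⊆ S and let G* be the reduction of G by removal of Y. Then G has no drainable siphons if and only if G* has no drainable siphons, and G has no self-replicable siphons if and only if G* has no self-replicable siphons. -/

import Mathlib

/-- A reaction network: a finite set of species, a finite set of complexes
(nonnegative vectors supported on the species), and a finite set of reactions
(a digraph on the complexes with no self-loops), such that every complex takes
part in some reaction and every species is part of some complex. -/
structure RN (ι : Type) where
  species : Finset ι
  complexes : Finset (ι → ℝ)
  reactions : Finset ((ι → ℝ) × (ι → ℝ))
  complexes_nonneg : ∀ y ∈ complexes, ∀ i, 0 ≤ y i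
  complexes_supp : ∀ y ∈ complexes, ∀ i, y i ≠ 0 → i ∈ species
  react_mem_fst : ∀ r ∈ reactions, r.1 ∈ complexes
  react_mem_snd : ∀ r ∈ reactions, r.2 ∈ complexes
  no_loops : ∀ r ∈ reactions, r.1 ≠ r.2
  complexes_used : ∀ y ∈ complexes, ∃ r ∈ reactions, r.1 = y ∨ r.2 = y
  species_used : ∀ i ∈ species, ∃ y ∈ complexes, y i ≠ 0

namespace RN

variable {ι : Type}

/-- A siphon: a nonempty set of species such that every reaction having a
product species in it also has a reactant species in it. -/
def IsSiphon (G : RN ι) (T : Set ι) : Prop :=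
  T.Nonempty ∧ T ⊆ ↑G.species ∧
    ∀ r ∈ G.reactions, (∃ i ∈ T, 0 < r.2 i) → ∃ i ∈ T, 0 < r.1 i

/-- A minimal siphon: a siphon not properly containing any other siphon. -/
def MinimalSiphon (G : RN ι) (T : Set ι) : Prop :=
  G.IsSiphon T ∧ ∀ T' : Set ι, G.IsSiphon T' → T' ⊆ T → T' = T

/-- A nonempty set of species is drainable if some finite sequence of reactions
(with repetitions allowed) strictly decreases every one of its coordinates. -/
def Drainable (G : RN ι) (T : Set ι) : Prop :=
  T.Nonempty ∧ T ⊆ ↑G.species ∧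
    ∃ L : List ((ι → ℝ) × (ι → ℝ)), (∀ r ∈ L, r ∈ G.reactions) ∧
      ∀ i ∈ T, (L.map (fun r => r.2 i - r.1 i)).sum < 0

/-- A nonempty set of species is self-replicable if some finite sequence of
reactions (with repetitions allowed) strictly increases every one of its
coordinates. -/
def SelfReplicable (G : RN ι) (T : Set ι) : Prop :=
  T.Nonempty ∧ T ⊆ ↑G.species ∧
    ∃ L : List ((ι → ℝ) × (ι → ℝ)), (∀ r ∈ L, r ∈ G.reactions) ∧
      ∀ i ∈ T, 0 < (L.map (fun r => r.2 i - r.1 i)).sum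

/-- A P-semiflow: a nonzero nonnegative vector supported on the species with
ωᵀN = 0, i.e. ω · (y' - y) = 0 for every reaction y → y'. -/
def IsPSemiflow (G : RN ι) (ω : ι → ℝ) : Prop :=
  (∀ i, 0 ≤ ω i) ∧ (∀ i, ω i ≠ 0 → i ∈ G.species) ∧ ω ≠ 0 ∧
    ∀ r ∈ G.reactions, ∑ i ∈ G.species, ω i * (r.2 i - r.1 i) = 0

/-- The siphon/P-semiflow property: every siphon contains the support of a
P-semiflow. -/
def SiphonPSemiflowProperty (G : RN ι) : Prop :=
  ∀ T : Set ι, G.IsSiphon T → ∃ ω : ι → ℝ, G.IsPSemiflow ω ∧ {i | 0 < ω i} ⊆ T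

/-- Consistency: there is a strictly positive T-semiflow, i.e. strictly
positive reaction weights v with N v = 0. -/
def Consistent (G : RN ι) : Prop :=
  ∃ v : ((ι → ℝ) × (ι → ℝ)) → ℝ, (∀ r ∈ G.reactions, 0 < v r) ∧
    ∀ i : ι, ∑ r ∈ G.reactions, v r * (r.2 i - r.1 i) = 0

/-- Conservativity: there is a strictly positive conservation law ω ≫ 0 with
ωᵀN = 0. -/
def Conservative (G : RN ι) : Prop :=
  ∃ ω : ι → ℝ, (∀ i ∈ G.species, 0 < ω i) ∧
    ∀ r ∈ G.reactions, ∑ i ∈ G.species, ω i * (r.2 i - r.1 i) = 0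

/-- A directed reaction path from `y` to `y'` all of whose non-endpoint
complexes lie in the set `A`. -/
def PathThrough (G : RN ι) (A : Set (ι → ℝ)) (y y' : ι → ℝ) : Prop :=
  ∃ L : List (ι → ℝ), (∀ z ∈ L, z ∈ A) ∧
    List.Chain (fun a b => (a, b) ∈ G.reactions) y (L ++ [y'])

end RN

variable {ι : Type}

/-- The complex consisting of the single species `j` (with unit coefficient),
for `j` in the given set. -/
def InterCplx [DecidableEq ι] (Y : Finset ι) (z : ι → ℝ) : Prop :=
  ∃ j ∈ Y, z = Pi.single j 1

/-- The complex `z` is supported off the set `Y`. -/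
def OffSet (Y : Finset ι) (z : ι → ℝ) : Prop := ∀ j ∈ Y, z j = 0

namespace RN

/-- `Y` is a set of intermediate species of `G`: (I1) every complex is either
supported off `Y` or equals a single species of `Y` with unit coefficient;
(I2) every `Y`-complex is connected to non-intermediate complexes by directed
reaction paths, in both directions, all of whose non-endpoints are
intermediates. -/
def IsIntermediateSet [DecidableEq ι] (G : RN ι) (Y : Finset ι) : Prop :=
  Y.Nonempty ∧ Y ⊆ G.species ∧
    (∀ y ∈ G.complexes, OffSet Y y ∨ InterCplx Y y) ∧
    (∀ j ∈ Y, ∃ y ∈ G.complexes, ∃ y' ∈ G.complexes, OffSet Y y ∧ OffSet Y y' ∧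
      G.PathThrough {z | InterCplx Y z} y (Pi.single j 1) ∧
      G.PathThrough {z | InterCplx Y z} (Pi.single j 1) y')

/-- `G'` is the reduction of `G` by removal of the set of intermediates `Y`:
its reactions are exactly the pairs `y → y'` of distinct non-intermediate
complexes of `G` joined by a directed reaction path all of whose non-endpoints
are intermediates (in particular all reactions of `G` between non-intermediate
complexes). -/
def IsIntermediateReduction [DecidableEq ι] (G : RN ι) (Y : Finset ι) (G' : RN ι) : Prop :=
  ∀ p : (ι → ℝ) × (ι → ℝ), p ∈ G'.reactions ↔
    (p.1 ∈ G.complexes ∧ p.2 ∈ G.complexes ∧ OffSet Y p.1 ∧ OffSet Y p.2 ∧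
      p.1 ≠ p.2 ∧ G.PathThrough {z | InterCplx Y z} p.1 p.2)

end RN

/-- The projection of a complex onto the coordinates outside `E` (the
coordinates in `E` are set to zero). -/
def projOff [DecidableEq ι] (E : Finset ι) (y : ι → ℝ) : ι → ℝ :=
  fun i => if i ∈ E then 0 else y i

namespace RN

/-- `E` is a set of catalysts of `G`, with `GE` the subnetwork of `G` implied
by `E`: (C1) every reaction either leaves the `E`-coordinates untouched or is
supported entirely in `E`; `GE` consists of the reactions of `G` involving
only species of `E`; and (C2) `GE` has no drainable and no self-replicable
siphons. -/
def IsCatalystSet (G GE : RN ι) (E : Finset ι) : Prop :=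
  E.Nonempty ∧ E ⊆ G.species ∧
    (∀ r ∈ G.reactions, (∀ i ∈ E, r.1 i = r.2 i) ∨ (∀ i, i ∉ E → r.1 i = 0 ∧ r.2 i = 0)) ∧
    (∀ p : (ι → ℝ) × (ι → ℝ), p ∈ GE.reactions ↔
      (p ∈ G.reactions ∧ (∀ i, p.1 i ≠ 0 → i ∈ E) ∧ (∀ i, p.2 i ≠ 0 → i ∈ E))) ∧
    (∀ T : Set ι, GE.IsSiphon T → ¬ GE.Drainable T ∧ ¬ GE.SelfReplicable T)

/-- `G'` is the reduction of `G` by removal of the set of catalysts `E`: its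
reactions are the projections off `E` of those reactions of `G` at least one
of whose projected sides is nonzero. -/
def IsCatalystReduction [DecidableEq ι] (G : RN ι) (E : Finset ι) (G' : RN ι) : Prop :=
  ∀ p : (ι → ℝ) × (ι → ℝ), p ∈ G'.reactions ↔
    ∃ r ∈ G.reactions, p = (projOff E r.1, projOff E r.2) ∧
      (projOff E r.1 ≠ 0 ∨ projOff E r.2 ≠ 0)

/-- A monomolecular network: every complex is either zero or a single species
with unit coefficient. -/
def Monomolecular [DecidableEq ι] (G : RN ι) : Prop :=
  ∀ y ∈ G.complexes, y = 0 ∨ ∃ i ∈ G.species, y = Pi.single i 1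

end RN
section IRAux
set_option linter.unusedSectionVars false

open List

variable {ι : Type} [DecidableEq ι]

/-- Net effect of a list of reactions at coordinate `i`. -/
def IRsum (M : List ((ι → ℝ) × (ι → ℝ))) (i : ι) : ℝ :=
  (M.map (fun r => r.2 i - r.1 i)).sum

@[simp] lemma IRsum_nil (i : ι) : IRsum ([] : List ((ι → ℝ) × (ι → ℝ))) i = 0 := rfl

@[simp] lemma IRsum_cons (e : (ι → ℝ) × (ι → ℝ)) (M : List ((ι → ℝ) × (ι → ℝ))) (i : ι) :
    IRsum (e :: M) i = (e.2 i - e.1 i) + IRsum M i := by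
  simp [IRsum]

@[simp] lemma IRsum_append (A B : List ((ι → ℝ) × (ι → ℝ))) (i : ι) :
    IRsum (A ++ B) i = IRsum A i + IRsum B i := by
  simp [IRsum]

lemma IRsum_perm {A B : List ((ι → ℝ) × (ι → ℝ))} (h : A.Perm B) (i : ι) :
    IRsum A i = IRsum B i :=
  (h.map _).sum_eq

lemma IRsum_join_replicate (n : ℕ) (K : List ((ι → ℝ) × (ι → ℝ))) (i : ι) :
    IRsum (List.flatten (List.replicate n K)) i = n * IRsum K i := by
  induction n with
  | zero => simp
  | succ n ih => rw [List.replicate_succ, List.flatten_cons, IRsum_append, ih]; push_cast; ring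

lemma IRsum_bind {α : Type*} (l : List α) (g : α → List ((ι → ℝ) × (ι → ℝ))) (i : ι) :
    IRsum (l.flatMap g) i = (l.map (fun a => IRsum (g a) i)).sum := by
  induction l with
  | nil => simp [IRsum]
  | cons a l ih => simp [List.flatMap_cons, ih]

lemma IRsum_nonneg {M : List ((ι → ℝ) × (ι → ℝ))} {i : ι}
    (h : ∀ e ∈ M, e.1 i ≤ e.2 i) : 0 ≤ IRsum M i := by
  apply List.sum_nonneg
  intro x hx
  obtain ⟨e, he, rfl⟩ := List.mem_map.1 hx
  linarith [h e he]

lemma IRsum_nonpos {M : List ((ι → ℝ) × (ι → ℝ))} {i : ι}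
    (h : ∀ e ∈ M, e.2 i ≤ e.1 i) : IRsum M i ≤ 0 := by
  induction M with
  | nil => simp
  | cons e M ih =>
    have h1 := h e (List.mem_cons_self)
    have h2 := ih (fun x hx => h x (List.mem_cons_of_mem e hx))
    rw [IRsum_cons]; linarith

lemma chain_zip_mem {α : Type*} {R : α → α → Prop} :
    ∀ {l : List α} {a : α}, List.Chain R a l → ∀ p ∈ (a :: l).zip l, R p.1 p.2 := by
  intro l
  induction l with
  | nil => intro a _ p hp; simp at hp
  | cons b l ih =>
    intro a h p hp
    unfold List.Chain at h; rw [List.isChain_cons_cons] at h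
    rw [List.zip_cons_cons] at hp
    rcases List.mem_cons.1 hp with rfl | hp
    · exact h.1
    · exact ih h.2 p hp

lemma zip_tele {α : Type*} (g : α → ℝ) :
    ∀ (P : List α) (y c : α),
      (((y :: (P ++ [c])).zip (P ++ [c])).map (fun p => g p.2 - g p.1)).sum = g c - g y := by
  intro P
  induction P with
  | nil => intro y c; simp
  | cons z P ih =>
    intro y c
    rw [List.cons_append, List.zip_cons_cons, List.map_cons, List.sum_cons, ih]
    ring

end IRAux
section IRAux2
set_option linter.unusedSectionVars false

open List

variable {ι : Type} [DecidableEq ι]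

/-- A "generalized edge": a pair of complexes of `G` joined by a directed
reaction path all of whose interior vertices are intermediates. -/
def GEdge (G : RN ι) (Y : Finset ι) (e : (ι → ℝ) × (ι → ℝ)) : Prop :=
  e.1 ∈ G.complexes ∧ e.2 ∈ G.complexes ∧ G.PathThrough {z | InterCplx Y z} e.1 e.2

lemma GEdge_of_reaction (G : RN ι) (Y : Finset ι) {r : (ι → ℝ) × (ι → ℝ)}
    (hr : r ∈ G.reactions) : GEdge G Y r :=
  ⟨G.react_mem_fst r hr, G.react_mem_snd r hr, [], fun z hz => by simp at hz,
    List.Chain.cons (by simpa using hr) List.Chain.nil⟩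

lemma GEdge_splice {G : RN ι} {Y : Finset ι} {a c : ι → ℝ} {j : ι} (hj : j ∈ Y)
    (h1 : GEdge G Y (a, Pi.single j 1)) (h2 : GEdge G Y (Pi.single j 1, c)) :
    GEdge G Y (a, c) := by
  obtain ⟨ha, -, L1, hL1, hc1⟩ := h1
  obtain ⟨-, hcc, L2, hL2, hc2⟩ := h2
  refine ⟨ha, hcc, L1 ++ Pi.single j 1 :: L2, ?_, ?_⟩
  · intro z hz
    rcases List.mem_append.1 hz with hz | hz
    · exact hL1 z hz
    · rcases List.mem_cons.1 hz with rfl | hz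
      · exact ⟨j, hj, rfl⟩
      · exact hL2 z hz
  · have heq : (L1 ++ Pi.single j 1 :: L2) ++ [c] = L1 ++ Pi.single j 1 :: (L2 ++ [c]) := by
      simp
    unfold List.Chain; rw [heq, List.isChain_cons_split]
    exact ⟨hc1, hc2⟩

/-- Lift a path to a list of reactions with the same net effect. -/
lemma path_lift (G : RN ι) {A : Set (ι → ℝ)} {a c : ι → ℝ}
    (h : G.PathThrough A a c) :
    ∃ K : List ((ι → ℝ) × (ι → ℝ)), (∀ r ∈ K, r ∈ G.reactions) ∧
      ∀ i, IRsum K i = c i - a i := by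
  obtain ⟨P, -, hchain⟩ := h
  refine ⟨(a :: (P ++ [c])).zip (P ++ [c]), ?_, ?_⟩
  · intro r hr
    have := chain_zip_mem hchain r hr
    simpa using this
  · intro i
    have := zip_tele (fun z => z i) P a c
    simpa [IRsum] using this

lemma list_lift (G : RN ι) (Y : Finset ι) :
    ∀ (M : List ((ι → ℝ) × (ι → ℝ))), (∀ e ∈ M, GEdge G Y e) →
      ∃ K : List ((ι → ℝ) × (ι → ℝ)), (∀ r ∈ K, r ∈ G.reactions) ∧
        ∀ i, IRsum K i = IRsum M i := by
  intro M
  induction M with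
  | nil => exact fun _ => ⟨[], by simp, by simp⟩
  | cons e M ih =>
    intro h
    obtain ⟨K1, hK1, hs1⟩ := path_lift G (h e (List.mem_cons_self)).2.2
    obtain ⟨K2, hK2, hs2⟩ := ih (fun x hx => h x (List.mem_cons_of_mem e hx))
    refine ⟨K1 ++ K2, ?_, ?_⟩
    · intro r hr; rcases List.mem_append.1 hr with hr | hr
      · exact hK1 r hr
      · exact hK2 r hr
    · intro i; rw [IRsum_append, hs1, hs2, IRsum_cons]

/-- Backward propagation of siphon membership along reaction paths. -/
lemma siphon_back {G : RN ι} {T : Set ι}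
    (hs : ∀ r ∈ G.reactions, (∃ i ∈ T, 0 < r.2 i) → ∃ i ∈ T, 0 < r.1 i) :
    ∀ (P : List (ι → ℝ)) (y c : ι → ℝ),
      List.Chain (fun a b => (a, b) ∈ G.reactions) y (P ++ [c]) →
      (∃ i ∈ T, 0 < c i) → ∃ i ∈ T, 0 < y i := by
  intro P
  induction P with
  | nil =>
    intro y c hch hc
    unfold List.Chain at hch; rw [List.nil_append, List.isChain_cons_cons] at hch
    exact hs (y, c) hch.1 hc
  | cons z P ih =>
    intro y c hch hc
    unfold List.Chain at hch; rw [List.cons_append, List.isChain_cons_cons] at hch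
    exact hs (y, z) hch.1 (ih z c hch.2 hc)

lemma single_pos_iff {j i : ι} : 0 < (Pi.single j 1 : ι → ℝ) i ↔ i = j := by
  rcases eq_or_ne i j with rfl | h
  · simp
  · simp [Pi.single_apply, h]

lemma single_apply_ne {j i : ι} (h : i ≠ j) : (Pi.single j 1 : ι → ℝ) i = 0 := by
  simp [Pi.single_apply, h]

lemma ne_single_of_apply_zero {j : ι} {z : ι → ℝ} (h : z j = 0) : z ≠ Pi.single j (1:ℝ) := by
  intro hz; rw [hz] at h; simp at h

/-- A complex distinct from `Pi.single j 1` vanishes at `j ∈ Y`. -/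
lemma cplx_coord {G : RN ι} {Y : Finset ι}
    (hI1 : ∀ y ∈ G.complexes, OffSet Y y ∨ InterCplx Y y)
    {z : ι → ℝ} (hz : z ∈ G.complexes) {j : ι} (hj : j ∈ Y)
    (hne : z ≠ Pi.single j 1) : z j = 0 := by
  rcases hI1 z hz with h | ⟨j', hj', rfl⟩
  · exact h j hj
  · refine single_apply_ne (fun hjj => hne ?_)
    rw [hjj]

open Classical in
/-- weight of a complex: 1 if it is an intermediate complex. -/
noncomputable def IRwt (Y : Finset ι) (z : ι → ℝ) : ℕ := if InterCplx Y z then 1 else 0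

noncomputable def IRmeas (Y : Finset ι) (M : List ((ι → ℝ) × (ι → ℝ))) : ℕ :=
  M.length + (M.map (fun e => IRwt Y e.1 + IRwt Y e.2)).sum

@[simp] lemma IRmeas_nil (Y : Finset ι) : IRmeas Y ([] : List ((ι → ℝ) × (ι → ℝ))) = 0 := rfl

lemma IRmeas_cons (Y : Finset ι) (e : (ι → ℝ) × (ι → ℝ)) (M : List ((ι → ℝ) × (ι → ℝ))) :
    IRmeas Y (e :: M) = 1 + IRwt Y e.1 + IRwt Y e.2 + IRmeas Y M := by
  simp [IRmeas]; omega

lemma IRmeas_perm {Y : Finset ι} {A B : List ((ι → ℝ) × (ι → ℝ))} (h : A.Perm B) :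
    IRmeas Y A = IRmeas Y B := by
  unfold IRmeas
  rw [h.length_eq, (h.map _).sum_eq]

lemma IRwt_single {Y : Finset ι} {j : ι} (hj : j ∈ Y) : IRwt Y (Pi.single j 1) = 1 := by
  unfold IRwt
  rw [if_pos ⟨j, hj, rfl⟩]

lemma IRwt_off {Y : Finset ι} {z : ι → ℝ} (hz : OffSet Y z) : IRwt Y z = 0 := by
  unfold IRwt
  rw [if_neg]
  rintro ⟨j, hj, rfl⟩
  have := hz j hj
  simp at this

end IRAux2
section IRAux3
set_option linter.unusedSectionVars false
set_option maxHeartbeats 1000000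

open List

variable {ι : Type} [DecidableEq ι]

lemma IRsurgery (G G' : RN ι) (Y : Finset ι) (T : Set ι) (ε : ℝ)
    (hY : G.IsIntermediateSet Y) (hred : G.IsIntermediateReduction Y G')
    (hsiph : ∀ r ∈ G.reactions, (∃ i ∈ T, 0 < r.2 i) → ∃ i ∈ T, 0 < r.1 i)
    (hε : ε = 1 ∨ ε = -1) :
    ∀ (n : ℕ) (M : List ((ι → ℝ) × (ι → ℝ))), IRmeas Y M ≤ n →
      (∀ e ∈ M, GEdge G Y e) →
      (∀ j ∈ Y, j ∈ T → 0 < ε * IRsum M j ∨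
        ∀ e ∈ M, e.1 ≠ Pi.single j 1 ∧ e.2 ≠ Pi.single j 1) →
      ∃ M' : List ((ι → ℝ) × (ι → ℝ)), (∀ p ∈ M', p ∈ G'.reactions) ∧
        ∀ i ∈ T, i ∉ Y → ε * IRsum M i ≤ ε * IRsum M' i := by
  obtain ⟨hYne, hYsub, hI1, hI2⟩ := hY
  intro n
  induction n using Nat.strong_induction_on with
  | _ n IH =>
  intro M hm hGE hH
  letI : DecidableEq ((ι → ℝ) × (ι → ℝ)) := Classical.decEq _
  have step : ∀ M₂ : List ((ι → ℝ) × (ι → ℝ)), IRmeas Y M₂ < IRmeas Y M →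
      (∀ e ∈ M₂, GEdge G Y e) →
      (∀ j ∈ Y, j ∈ T → 0 < ε * IRsum M₂ j ∨
        ∀ e ∈ M₂, e.1 ≠ Pi.single j 1 ∧ e.2 ≠ Pi.single j 1) →
      (∀ i ∈ T, i ∉ Y → ε * IRsum M i ≤ ε * IRsum M₂ i) →
      ∃ M' : List ((ι → ℝ) × (ι → ℝ)), (∀ p ∈ M', p ∈ G'.reactions) ∧
        ∀ i ∈ T, i ∉ Y → ε * IRsum M i ≤ ε * IRsum M' i := by
    intro M₂ hlt hGE₂ hH₂ hmono
    obtain ⟨M', h1, h2⟩ := IH (IRmeas Y M₂) (lt_of_lt_of_le hlt hm) M₂ le_rfl hGE₂ hH₂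
    exact ⟨M', h1, fun i hi hiY => le_trans (hmono i hi hiY) (h2 i hi hiY)⟩
  by_cases hLoop : ∃ e ∈ M, e.1 = e.2
  · -- delete a loop
    obtain ⟨e, heM, hee⟩ := hLoop
    have hperm : M.Perm (e :: M.erase e) := List.perm_cons_erase heM
    have hsub : M.erase e ⊆ M := fun x hx => List.mem_of_mem_erase hx
    have hsum : ∀ i, IRsum M i = IRsum (M.erase e) i := by
      intro i
      rw [IRsum_perm hperm, IRsum_cons, ← hee]
      ring
    refine step (M.erase e) ?_ (fun x hx => hGE x (hsub hx)) ?_ ?_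
    · have h1 : IRmeas Y M = 1 + IRwt Y e.1 + IRwt Y e.2 + IRmeas Y (M.erase e) :=
        (IRmeas_perm hperm).trans (IRmeas_cons _ _ _)
      omega
    · intro j hj hjT
      rcases hH j hj hjT with h | h
      · left; rw [← hsum j]; exact h
      · right; exact fun x hx => h x (hsub hx)
    · intro i hi hiY; rw [hsum i]
  by_cases hSpl : ∃ j ∈ Y, (∃ e ∈ M, e.2 = Pi.single j 1) ∧ ∃ e' ∈ M, e'.1 = Pi.single j 1
  · -- splice two edges at an intermediate
    obtain ⟨j, hj, ⟨e, heM, he2⟩, e', he'M, he'1⟩ := hSpl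
    have hne : e' ≠ e := by
      intro h
      subst h
      exact hLoop ⟨e', he'M, he'1.trans he2.symm⟩
    have he'Me : e' ∈ M.erase e := by
      have h := (List.perm_cons_erase heM).mem_iff.1 he'M
      rcases List.mem_cons.1 h with h | h
      · exact absurd h hne
      · exact h
    set rest := (M.erase e).erase e' with hrestdef
    have hperm : M.Perm (e :: e' :: rest) :=
      (List.perm_cons_erase heM).trans ((List.perm_cons_erase he'Me).cons e)
    have hrsub : rest ⊆ M := fun x hx =>
      List.mem_of_mem_erase (List.mem_of_mem_erase hx)
    have hcomp : GEdge G Y (e.1, e'.2) := by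
      apply GEdge_splice hj
      · rw [← he2, Prod.mk.eta]; exact hGE e heM
      · rw [← he'1, Prod.mk.eta]; exact hGE e' he'M
    have hsum : ∀ i, IRsum M i = IRsum ((e.1, e'.2) :: rest) i := by
      intro i
      have ha : IRsum M i = (e.2 i - e.1 i) + ((e'.2 i - e'.1 i) + IRsum rest i) := by
        rw [IRsum_perm hperm, IRsum_cons, IRsum_cons]
      have hb : IRsum ((e.1, e'.2) :: rest) i = (e'.2 i - e.1 i) + IRsum rest i :=
        IRsum_cons _ _ _
      rw [ha, hb, he2, he'1]
      ring
    refine step ((e.1, e'.2) :: rest) ?_ ?_ ?_ ?_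
    · have h1 : IRmeas Y M = 1 + IRwt Y e.1 + IRwt Y e.2 +
          (1 + IRwt Y e'.1 + IRwt Y e'.2 + IRmeas Y rest) := by
        rw [IRmeas_perm hperm, IRmeas_cons, IRmeas_cons]
      have h2 : IRmeas Y ((e.1, e'.2) :: rest) =
          1 + IRwt Y e.1 + IRwt Y e'.2 + IRmeas Y rest := IRmeas_cons _ _ _
      have h3 : IRwt Y e.2 = 1 := by rw [he2]; exact IRwt_single hj
      omega
    · intro x hx
      rcases List.mem_cons.1 hx with rfl | hx
      · exact hcomp
      · exact hGE x (hrsub hx)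
    · intro j' hj' hj'T
      rcases hH j' hj' hj'T with h | h
      · left; rw [← hsum j']; exact h
      · right
        intro x hx
        rcases List.mem_cons.1 hx with rfl | hx
        · exact ⟨(h e heM).1, (h e' he'M).2⟩
        · exact h x (hrsub hx)
    · intro i hi hiY; rw [hsum i]
  by_cases hIn : ∃ e ∈ M, ∃ j ∈ Y, e.2 = Pi.single j 1
  · -- an edge into an intermediate with no outgoing partner
    obtain ⟨e, heM, j, hj, he2⟩ := hIn
    have hnoout : ∀ x ∈ M, x.1 ≠ Pi.single j 1 := by
      intro x hx h1
      exact hSpl ⟨j, hj, ⟨e, heM, he2⟩, x, hx, h1⟩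
    set rest := M.erase e with hrestdef
    have hperm : M.Perm (e :: rest) := List.perm_cons_erase heM
    have hrsub : rest ⊆ M := fun x hx => List.mem_of_mem_erase hx
    have hzero1 : ∀ x ∈ M, x.1 j = 0 := fun x hx =>
      cplx_coord hI1 (hGE x hx).1 hj (hnoout x hx)
    have hrestnn : 0 ≤ IRsum rest j := by
      apply IRsum_nonneg
      intro x hx
      rw [hzero1 x (hrsub hx)]
      exact G.complexes_nonneg _ (hGE x (hrsub hx)).2.1 j
    have hMj : IRsum M j = 1 + IRsum rest j := by
      rw [IRsum_perm hperm, IRsum_cons, he2, hzero1 e heM, Pi.single_eq_same]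
      ring
    obtain ⟨u, hu, w, hw, huoff, hwoff, hpu, hpw⟩ := hI2 j hj
    have hsmem : (Pi.single j 1 : ι → ℝ) ∈ G.complexes := he2 ▸ (hGE e heM).2.1
    have hedge_jw : GEdge G Y (Pi.single j 1, w) := ⟨hsmem, hw, hpw⟩
    have hcomp : GEdge G Y (e.1, w) := by
      apply GEdge_splice hj _ hedge_jw
      rw [← he2, Prod.mk.eta]; exact hGE e heM
    have hjnT : ε = -1 → j ∉ T := by
      intro hε1 hjT
      rcases hH j hj hjT with h | h
      · rw [hε1] at h
        rw [hMj] at h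
        linarith
      · exact (h e heM).2 he2
    have hwT : ∀ i ∈ T, ε = -1 → w i = 0 := by
      intro i hi hε1
      by_contra hwi
      have hwipos : 0 < w i :=
        lt_of_le_of_ne (G.complexes_nonneg w hw i) (Ne.symm hwi)
      obtain ⟨P, -, hchain⟩ := hpw
      obtain ⟨i', hi', hpos'⟩ := siphon_back hsiph P _ _ hchain ⟨i, hi, hwipos⟩
      exact hjnT hε1 ((single_pos_iff.1 hpos') ▸ hi')
    refine step ((e.1, w) :: rest) ?_ ?_ ?_ ?_
    · have h1 : IRmeas Y M = 1 + IRwt Y e.1 + IRwt Y e.2 + IRmeas Y rest :=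
        (IRmeas_perm hperm).trans (IRmeas_cons _ _ _)
      have h2 : IRmeas Y ((e.1, w) :: rest) =
          1 + IRwt Y e.1 + IRwt Y w + IRmeas Y rest := IRmeas_cons _ _ _
      have h3 : IRwt Y e.2 = 1 := by rw [he2]; exact IRwt_single hj
      have h4 : IRwt Y w = 0 := IRwt_off hwoff
      omega
    · intro x hx
      rcases List.mem_cons.1 hx with rfl | hx
      · exact hcomp
      · exact hGE x (hrsub hx)
    · intro j' hj' hj'T
      have hb : IRsum ((e.1, w) :: rest) j' = (w j' - e.1 j') + IRsum rest j' :=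
        IRsum_cons _ _ _
      rcases eq_or_ne j' j with rfl | hjj
      · have hε1 : ε = 1 := by
          rcases hε with h | h
          · exact h
          · exact absurd hj'T (hjnT h)
        by_cases hx : ∃ x ∈ rest, x.2 = Pi.single j' 1
        · left
          obtain ⟨x, hxr, hx2⟩ := hx
          have hperm2 : rest.Perm (x :: rest.erase x) := List.perm_cons_erase hxr
          have h1 : IRsum rest j' = 1 + IRsum (rest.erase x) j' := by
            rw [IRsum_perm hperm2, IRsum_cons, hx2, hzero1 x (hrsub hxr),
              Pi.single_eq_same]
            ring
          have h2 : 0 ≤ IRsum (rest.erase x) j' := by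
            apply IRsum_nonneg
            intro z hz
            have hzM : z ∈ M := hrsub (List.mem_of_mem_erase hz)
            rw [hzero1 z hzM]
            exact G.complexes_nonneg _ (hGE z hzM).2.1 j'
          rw [hε1, one_mul, hb, hwoff j' hj, hzero1 e heM, h1]
          linarith
        · right
          intro x hx'
          rcases List.mem_cons.1 hx' with rfl | hx'
          · exact ⟨hnoout e heM, ne_single_of_apply_zero (hwoff j' hj)⟩
          · exact ⟨hnoout x (hrsub hx'), fun h2' => hx ⟨x, hx', h2'⟩⟩
      · have hsum' : IRsum ((e.1, w) :: rest) j' = IRsum M j' := by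
          rw [hb, IRsum_perm hperm, IRsum_cons, he2, single_apply_ne hjj,
            hwoff j' hj']
        rcases hH j' hj' hj'T with h | h
        · left; rw [hsum']; exact h
        · right
          intro x hx'
          rcases List.mem_cons.1 hx' with rfl | hx'
          · exact ⟨(h e heM).1, ne_single_of_apply_zero (hwoff j' hj')⟩
          · exact h x (hrsub hx')
    · intro i hi hiY
      have hin : i ≠ j := fun h => hiY (h ▸ hj)
      have hkey : 0 ≤ ε * w i := by
        rcases hε with h | h
        · rw [h, one_mul]; exact G.complexes_nonneg w hw i
        · rw [hwT i hi h, mul_zero]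
      have h1 : IRsum M i = (0 - e.1 i) + IRsum rest i := by
        rw [IRsum_perm hperm, IRsum_cons, he2, single_apply_ne hin]
      have h2 : IRsum ((e.1, w) :: rest) i = (w i - e.1 i) + IRsum rest i :=
        IRsum_cons _ _ _
      have hdiff : ε * IRsum ((e.1, w) :: rest) i - ε * IRsum M i = ε * w i := by
        rw [h1, h2]; ring
      linarith
  by_cases hOut : ∃ e ∈ M, ∃ j ∈ Y, e.1 = Pi.single j 1
  · -- an edge out of an intermediate, no incoming edges anywhere
    obtain ⟨e, heM, j, hj, he1⟩ := hOut
    have hnoin : ∀ x ∈ M, OffSet Y x.2 := by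
      intro x hx
      rcases hI1 x.2 (hGE x hx).2.1 with h | ⟨j'', hj'', hx2⟩
      · exact h
      · exact absurd ⟨x, hx, j'', hj'', hx2⟩ hIn
    set rest := M.erase e with hrestdef
    have hperm : M.Perm (e :: rest) := List.perm_cons_erase heM
    have hrsub : rest ⊆ M := fun x hx => List.mem_of_mem_erase hx
    have hrestnp : IRsum rest j ≤ 0 := by
      apply IRsum_nonpos
      intro x hx
      rw [hnoin x (hrsub hx) j hj]
      exact G.complexes_nonneg _ (hGE x (hrsub hx)).1 j
    have hMj : IRsum M j = -1 + IRsum rest j := by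
      rw [IRsum_perm hperm, IRsum_cons, hnoin e heM j hj, he1, Pi.single_eq_same]
      ring
    have hjnT : ε = 1 → j ∉ T := by
      intro hε1 hjT
      rcases hH j hj hjT with h | h
      · rw [hε1, one_mul, hMj] at h
        linarith
      · exact (h e heM).1 he1
    rcases hε with hε1 | hε1
    · -- ε = 1 : delete e, its product vanishes on T
      have hjT' := hjnT hε1
      have he2T : ∀ i ∈ T, e.2 i = 0 := by
        intro i hi
        by_contra hne
        have hpos2 : 0 < e.2 i :=
          lt_of_le_of_ne (G.complexes_nonneg _ (hGE e heM).2.1 i) (Ne.symm hne)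
        obtain ⟨P, -, hchain⟩ := (hGE e heM).2.2
        obtain ⟨i', hi', hposi⟩ := siphon_back hsiph P _ _ hchain ⟨i, hi, hpos2⟩
        rw [he1] at hposi
        exact hjT' ((single_pos_iff.1 hposi) ▸ hi')
      refine step rest ?_ (fun x hx => hGE x (hrsub hx)) ?_ ?_
      · have h1 : IRmeas Y M = 1 + IRwt Y e.1 + IRwt Y e.2 + IRmeas Y rest :=
          (IRmeas_perm hperm).trans (IRmeas_cons _ _ _)
        omega
      · intro j' hj' hj'T
        have hjj : j' ≠ j := fun h => hjT' (h ▸ hj'T)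
        have hsame : IRsum M j' = IRsum rest j' := by
          rw [IRsum_perm hperm, IRsum_cons, hnoin e heM j' hj', he1,
            single_apply_ne hjj]
          ring
        rcases hH j' hj' hj'T with h | h
        · left; rw [← hsame]; exact h
        · right; exact fun x hx => h x (hrsub hx)
      · intro i hi hiY
        have hin : i ≠ j := fun h => hiY (h ▸ hj)
        have hsame : IRsum M i = IRsum rest i := by
          rw [IRsum_perm hperm, IRsum_cons, he2T i hi, he1, single_apply_ne hin]
          ring
        rw [hsame]
    · -- ε = -1 : prepend the incoming path from I2
      obtain ⟨u, hu, w, hw, huoff, hwoff, hpu, hpw⟩ := hI2 j hj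
      have hsmem : (Pi.single j 1 : ι → ℝ) ∈ G.complexes := he1 ▸ (hGE e heM).1
      have hedge_uj : GEdge G Y (u, Pi.single j 1) := ⟨hu, hsmem, hpu⟩
      have hcomp : GEdge G Y (u, e.2) := by
        apply GEdge_splice hj hedge_uj
        rw [← he1, Prod.mk.eta]; exact hGE e heM
      refine step ((u, e.2) :: rest) ?_ ?_ ?_ ?_
      · have h1 : IRmeas Y M = 1 + IRwt Y e.1 + IRwt Y e.2 + IRmeas Y rest :=
          (IRmeas_perm hperm).trans (IRmeas_cons _ _ _)
        have h2 : IRmeas Y ((u, e.2) :: rest) =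
            1 + IRwt Y u + IRwt Y e.2 + IRmeas Y rest := IRmeas_cons _ _ _
        have h3 : IRwt Y e.1 = 1 := by rw [he1]; exact IRwt_single hj
        have h4 : IRwt Y u = 0 := IRwt_off huoff
        omega
      · intro x hx
        rcases List.mem_cons.1 hx with rfl | hx
        · exact hcomp
        · exact hGE x (hrsub hx)
      · intro j' hj' hj'T
        have hb : IRsum ((u, e.2) :: rest) j' = (e.2 j' - u j') + IRsum rest j' :=
          IRsum_cons _ _ _
        rcases eq_or_ne j' j with rfl | hjj
        · by_cases hx : ∃ x ∈ rest, x.1 = Pi.single j' 1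
          · left
            obtain ⟨x, hxr, hx1⟩ := hx
            have hperm2 : rest.Perm (x :: rest.erase x) := List.perm_cons_erase hxr
            have h1 : IRsum rest j' = -1 + IRsum (rest.erase x) j' := by
              rw [IRsum_perm hperm2, IRsum_cons, hnoin x (hrsub hxr) j' hj, hx1,
                Pi.single_eq_same]
              ring
            have h2 : IRsum (rest.erase x) j' ≤ 0 := by
              apply IRsum_nonpos
              intro z hz
              have hzM : z ∈ M := hrsub (List.mem_of_mem_erase hz)
              rw [hnoin z hzM j' hj]
              exact G.complexes_nonneg _ (hGE z hzM).1 j'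
            rw [hε1, hb, hnoin e heM j' hj, huoff j' hj, h1]
            linarith
          · right
            intro x hx'
            rcases List.mem_cons.1 hx' with rfl | hx'
            · exact ⟨ne_single_of_apply_zero (huoff j' hj),
                ne_single_of_apply_zero (hnoin e heM j' hj)⟩
            · exact ⟨fun h1' => hx ⟨x, hx', h1'⟩,
                ne_single_of_apply_zero (hnoin x (hrsub hx') j' hj)⟩
        · have hsum' : IRsum ((u, e.2) :: rest) j' = IRsum M j' := by
            rw [hb, IRsum_perm hperm, IRsum_cons, he1, single_apply_ne hjj,
              huoff j' hj']
          rcases hH j' hj' hj'T with h | h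
          · left; rw [hsum']; exact h
          · right
            intro x hx'
            rcases List.mem_cons.1 hx' with rfl | hx'
            · exact ⟨ne_single_of_apply_zero (huoff j' hj'), (h e heM).2⟩
            · exact h x (hrsub hx')
      · intro i hi hiY
        have hin : i ≠ j := fun h => hiY (h ▸ hj)
        have hunn : 0 ≤ u i := G.complexes_nonneg u hu i
        have h1 : IRsum M i = (e.2 i - 0) + IRsum rest i := by
          rw [IRsum_perm hperm, IRsum_cons, he1, single_apply_ne hin]
        have h2 : IRsum ((u, e.2) :: rest) i = (e.2 i - u i) + IRsum rest i :=
          IRsum_cons _ _ _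
        have hdiff : ε * IRsum ((u, e.2) :: rest) i - ε * IRsum M i = u i := by
          rw [h1, h2, hε1]; ring
        linarith
  · -- base case : all edges are reactions of the reduction
    refine ⟨M, ?_, fun i _ _ => le_refl _⟩
    intro p hp
    have hGEp := hGE p hp
    have hoff1 : OffSet Y p.1 := by
      rcases hI1 p.1 hGEp.1 with h | ⟨j, hj, h⟩
      · exact h
      · exact absurd ⟨p, hp, j, hj, h⟩ hOut
    have hoff2 : OffSet Y p.2 := by
      rcases hI1 p.2 hGEp.2.1 with h | ⟨j, hj, h⟩
      · exact h
      · exact absurd ⟨p, hp, j, hj, h⟩ hIn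
    have hne : p.1 ≠ p.2 := fun h => hLoop ⟨p, hp, h⟩
    exact (hred p).2 ⟨hGEp.1, hGEp.2.1, hoff1, hoff2, hne, hGEp.2.2⟩

end IRAux3
section IRAux4
set_option linter.unusedSectionVars false
set_option maxHeartbeats 1000000

open List

variable {ι : Type} [DecidableEq ι]

lemma IRsum_def (M : List ((ι → ℝ) × (ι → ℝ))) (i : ι) :
    IRsum M i = (M.map (fun r => r.2 i - r.1 i)).sum := rfl

lemma path_splice {G : RN ι} {Y : Finset ι} {a c : ι → ℝ} {j : ι} (hj : j ∈ Y)
    (h1 : G.PathThrough {z | InterCplx Y z} a (Pi.single j 1))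
    (h2 : G.PathThrough {z | InterCplx Y z} (Pi.single j 1) c) :
    G.PathThrough {z | InterCplx Y z} a c := by
  obtain ⟨L1, hL1, hc1⟩ := h1
  obtain ⟨L2, hL2, hc2⟩ := h2
  refine ⟨L1 ++ Pi.single j 1 :: L2, ?_, ?_⟩
  · intro z hz
    rcases List.mem_append.1 hz with hz | hz
    · exact hL1 z hz
    · rcases List.mem_cons.1 hz with rfl | hz
      · exact ⟨j, hj, rfl⟩
      · exact hL2 z hz
  · have heq : (L1 ++ Pi.single j 1 :: L2) ++ [c] = L1 ++ Pi.single j 1 :: (L2 ++ [c]) := by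
      simp
    unfold List.Chain; rw [heq, List.isChain_cons_split]
    exact ⟨hc1, hc2⟩

lemma list_sum_eq_single {α : Type*} (l : List α) (f : α → ℝ) (a : α) (ha : a ∈ l)
    (hnd : l.Nodup) (h0 : ∀ b ∈ l, b ≠ a → f b = 0) : (l.map f).sum = f a := by
  induction l with
  | nil => simp at ha
  | cons x l ih =>
    rcases List.mem_cons.1 ha with h | ha'
    · simp only [List.map_cons, List.sum_cons]
      have hz : ∀ b ∈ l, f b = 0 := fun b hb =>
        h0 b (List.mem_cons_of_mem x hb)
          (fun hba => (List.nodup_cons.1 hnd).1 ((hba.trans h) ▸ hb))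
      rw [List.sum_eq_zero (fun y hy => by
        obtain ⟨b, hb, rfl⟩ := List.mem_map.1 hy
        exact hz b hb), ← h]
      ring
    · have hxa : x ≠ a := fun hxa => (List.nodup_cons.1 hnd).1 (hxa ▸ ha')
      rw [List.map_cons, List.sum_cons, h0 x (List.mem_cons_self) hxa,
        ih ha' (List.nodup_cons.1 hnd).2
          (fun b hb hba => h0 b (List.mem_cons_of_mem x hb) hba)]
      ring

lemma IRtoReduced (G G' : RN ι) (Y : Finset ι) (T : Set ι) (ε : ℝ)
    (hY : G.IsIntermediateSet Y) (hred : G.IsIntermediateReduction Y G')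
    (hε : ε = 1 ∨ ε = -1) (hsiph : G.IsSiphon T)
    (L : List ((ι → ℝ) × (ι → ℝ))) (hL : ∀ r ∈ L, r ∈ G.reactions)
    (hdrain : ∀ i ∈ T, 0 < ε * IRsum L i) :
    ∃ T' : Set ι, G'.IsSiphon T' ∧ ∃ M', (∀ p ∈ M', p ∈ G'.reactions) ∧
      ∀ i ∈ T', 0 < ε * IRsum M' i := by
  obtain ⟨hTne, hTsub, hscond⟩ := hsiph
  obtain ⟨M', hM', hmono⟩ := IRsurgery G G' Y T ε hY hred hscond hε (IRmeas Y L) L le_rfl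
    (fun e he => GEdge_of_reaction G Y (hL e he))
    (fun j hj hjT => Or.inl (hdrain j hjT))
  have hpos : ∀ i ∈ T, i ∉ Y → 0 < ε * IRsum M' i := fun i hi hiY =>
    lt_of_lt_of_le (hdrain i hi) (hmono i hi hiY)
  refine ⟨T \ ↑Y, ⟨?_, ?_, ?_⟩, M', hM', ?_⟩
  · -- nonempty
    obtain ⟨i0, hi0⟩ := hTne
    by_cases hi0Y : i0 ∈ Y
    · obtain ⟨u, hu, w, hw, huoff, hwoff, hpu, hpw⟩ := hY.2.2.2 i0 hi0Y
      obtain ⟨P, -, hchain⟩ := hpu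
      obtain ⟨i', hi', hposi⟩ := siphon_back hscond P _ _ hchain
        ⟨i0, hi0, by rw [Pi.single_eq_same]; norm_num⟩
      refine ⟨i', hi', fun hY' => ?_⟩
      rw [huoff i' (Finset.mem_coe.1 hY')] at hposi
      linarith
    · exact ⟨i0, hi0, fun h => hi0Y (Finset.mem_coe.1 h)⟩
  · -- subset of species
    intro i hi
    have hp := hpos i hi.1 (fun h => hi.2 (Finset.mem_coe.2 h))
    have hsne : IRsum M' i ≠ 0 := fun h0 => by rw [h0, mul_zero] at hp; linarith
    have hex : ∃ p ∈ M', p.2 i - p.1 i ≠ 0 := by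
      by_contra hall
      push_neg at hall
      exact hsne (List.sum_eq_zero (fun x hx => by
        obtain ⟨p, hp', rfl⟩ := List.mem_map.1 hx
        exact hall p hp'))
    obtain ⟨p, hp', hne0⟩ := hex
    have hor : p.1 i ≠ 0 ∨ p.2 i ≠ 0 := by
      by_contra h
      push_neg at h
      rw [h.1, h.2] at hne0
      simp at hne0
    rcases hor with h | h
    · exact Finset.mem_coe.2 (G'.complexes_supp _ (G'.react_mem_fst p (hM' p hp')) i h)
    · exact Finset.mem_coe.2 (G'.complexes_supp _ (G'.react_mem_snd p (hM' p hp')) i h)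
  · -- siphon condition
    intro r hr hprod
    obtain ⟨hr1c, hr2c, hoff1, hoff2, hrne, hpath⟩ := (hred r).1 hr
    obtain ⟨P, -, hchain⟩ := hpath
    obtain ⟨i', hi', hposi⟩ := siphon_back hscond P _ _ hchain
      (by obtain ⟨i, hi, hp⟩ := hprod; exact ⟨i, hi.1, hp⟩)
    refine ⟨i', ⟨hi', fun hY' => ?_⟩, hposi⟩
    rw [hoff1 i' (Finset.mem_coe.1 hY')] at hposi
    linarith
  · intro i hi
    exact hpos i hi.1 (fun h => hi.2 (Finset.mem_coe.2 h))

lemma IRtoOriginal (G G' : RN ι) (Y : Finset ι) (T' : Set ι) (ε : ℝ)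
    (hY : G.IsIntermediateSet Y) (hred : G.IsIntermediateReduction Y G')
    (hε : ε = 1 ∨ ε = -1) (hsiph' : G'.IsSiphon T')
    (L' : List ((ι → ℝ) × (ι → ℝ))) (hL' : ∀ p ∈ L', p ∈ G'.reactions)
    (hdrain' : ∀ i ∈ T', 0 < ε * IRsum L' i) :
    ∃ T : Set ι, G.IsSiphon T ∧ ∃ M, (∀ r ∈ M, r ∈ G.reactions) ∧
      ∀ i ∈ T, 0 < ε * IRsum M i := by
  classical
  obtain ⟨hYne, hYsub, hI1, hI2⟩ := hY
  obtain ⟨hT'ne, hT'sub, hscond'⟩ := hsiph'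
  have hreact_path : ∀ r ∈ G.reactions, G.PathThrough {z | InterCplx Y z} r.1 r.2 :=
    fun r hr => ⟨[], by simp, List.Chain.cons (by simpa using hr) List.Chain.nil⟩
  have hGc : ∀ z ∈ G'.complexes, z ∈ G.complexes ∧ OffSet Y z := by
    intro z hz
    obtain ⟨r, hr, hzr⟩ := G'.complexes_used z hz
    obtain ⟨h1, h2, h3, h4, -, -⟩ := (hred r).1 hr
    rcases hzr with h | h
    · rw [← h]; exact ⟨h1, h3⟩
    · rw [← h]; exact ⟨h2, h4⟩
  have hspY : ∀ i ∈ G'.species, i ∈ G.species ∧ i ∉ Y := by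
    intro i hi
    obtain ⟨z, hz, hzi⟩ := G'.species_used i hi
    obtain ⟨hzG, hzoff⟩ := hGc z hz
    exact ⟨G.complexes_supp z hzG i hzi, fun hiY => hzi (hzoff i hiY)⟩
  set YT : Set ι := {j | j ∈ Y ∧ ∃ w, w ∈ G.complexes ∧ OffSet Y w ∧
    G.PathThrough {z | InterCplx Y z} (Pi.single j 1) w ∧ ∃ i ∈ T', 0 < w i}
    with hYTdef
  set T : Set ι := T' ∪ YT with hTdef
  have hT'T : T' ⊆ T := Set.subset_union_left
  have hT'Y : ∀ i ∈ T', i ∉ Y := fun i hi => (hspY i (Finset.mem_coe.1 (hT'sub hi))).2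
  have hscondT : ∀ r ∈ G.reactions, (∃ i ∈ T, 0 < r.2 i) → ∃ i ∈ T, 0 < r.1 i := by
    rintro r hr ⟨i, hiT, hipos⟩
    have hr1c := G.react_mem_fst r hr
    have hr2c := G.react_mem_snd r hr
    rcases hI1 r.2 hr2c with hoff2 | ⟨j, hj, hsing2⟩
    · -- r.2 off Y; the witness lies in T'
      have hiY : i ∉ Y := fun hiY => by rw [hoff2 i hiY] at hipos; linarith
      have hiT' : i ∈ T' := by
        rcases hiT with h | h
        · exact h
        · exact absurd h.1 hiY
      rcases hI1 r.1 hr1c with hoff1 | ⟨j', hj', hsing1⟩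
      · have hrG' : r ∈ G'.reactions := (hred r).2
          ⟨hr1c, hr2c, hoff1, hoff2, G.no_loops r hr, hreact_path r hr⟩
        obtain ⟨i', hi', hp⟩ := hscond' r hrG' ⟨i, hiT', hipos⟩
        exact ⟨i', hT'T hi', hp⟩
      · refine ⟨j', Or.inr ⟨hj', r.2, hr2c, hoff2, ?_, i, hiT', hipos⟩, ?_⟩
        · rw [← hsing1]; exact hreact_path r hr
        · rw [hsing1, Pi.single_eq_same]; norm_num
    · -- r.2 = single j with j ∈ T, hence j ∈ YT
      have hij : i = j := by
        rw [hsing2] at hipos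
        exact single_pos_iff.1 hipos
      have hjT : j ∈ T := hij ▸ hiT
      have hjYT : j ∈ YT := by
        rcases hjT with h | h
        · exact absurd hj (hT'Y j h)
        · exact h
      obtain ⟨-, w, hw, hwoff, hpw, i'', hi''T', hwpos⟩ := hjYT
      rcases hI1 r.1 hr1c with hoff1 | ⟨j', hj', hsing1⟩
      · have hpath1 : G.PathThrough {z | InterCplx Y z} r.1 w := by
          apply path_splice hj _ hpw
          rw [← hsing2]; exact hreact_path r hr
        by_cases hrw : r.1 = w
        · exact ⟨i'', hT'T hi''T', by rw [hrw]; exact hwpos⟩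
        · have hG'r : (r.1, w) ∈ G'.reactions := (hred (r.1, w)).2
            ⟨hr1c, hw, hoff1, hwoff, hrw, hpath1⟩
          obtain ⟨i3, hi3, hp3⟩ := hscond' (r.1, w) hG'r ⟨i'', hi''T', hwpos⟩
          exact ⟨i3, hT'T hi3, hp3⟩
      · have hpath1 : G.PathThrough {z | InterCplx Y z} (Pi.single j' 1) w := by
          apply path_splice hj _ hpw
          rw [← hsing1, ← hsing2]
          exact hreact_path r hr
        refine ⟨j', Or.inr ⟨hj', w, hw, hwoff, hpath1, i'', hi''T', hwpos⟩, ?_⟩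
        rw [hsing1, Pi.single_eq_same]; norm_num
  have hsiphT : G.IsSiphon T := by
    refine ⟨hT'ne.mono hT'T, ?_, hscondT⟩
    rintro i (h | h)
    · exact Finset.mem_coe.2 (hspY i (Finset.mem_coe.1 (hT'sub h))).1
    · exact Finset.mem_coe.2 (hYsub h.1)
  -- the main lifted list
  obtain ⟨K, hK, hKsum⟩ := list_lift G Y L' (fun p hp => by
    obtain ⟨h1, h2, -, -, -, h6⟩ := (hred p).1 (hL' p hp)
    exact ⟨h1, h2, h6⟩)
  have hKY : ∀ j ∈ Y, IRsum K j = 0 := by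
    intro j hj
    rw [hKsum j, IRsum_def]
    apply List.sum_eq_zero
    intro x hx
    obtain ⟨p, hp, rfl⟩ := List.mem_map.1 hx
    obtain ⟨-, -, ho1, ho2, -, -⟩ := (hred p).1 (hL' p hp)
    rw [ho1 j hj, ho2 j hj]
    ring
  set YJ : Finset ι := Y.filter (fun j => j ∈ YT) with hYJdef
  have hKj : ∀ j ∈ YJ, ∃ Kj : List ((ι → ℝ) × (ι → ℝ)),
      (∀ r ∈ Kj, r ∈ G.reactions) ∧ 0 < ε * IRsum Kj j ∧
      ∀ j' ∈ Y, j' ≠ j → IRsum Kj j' = 0 := by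
    intro j hjYJ
    have hjY : j ∈ Y := (Finset.mem_filter.1 hjYJ).1
    rcases hε with hε1 | hε1
    · obtain ⟨u, hu, w, hw, huoff, hwoff, hpu, hpw⟩ := hI2 j hjY
      obtain ⟨Kj, hKjr, hKjs⟩ := path_lift G hpu
      refine ⟨Kj, hKjr, ?_, ?_⟩
      · rw [hε1, one_mul, hKjs j, Pi.single_eq_same, huoff j hjY]; norm_num
      · intro j' hj' hne
        rw [hKjs j', single_apply_ne hne, huoff j' hj']; ring
    · have hjYT : j ∈ YT := (Finset.mem_filter.1 hjYJ).2
      obtain ⟨-, w, hw, hwoff, hpw, -⟩ := hjYT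
      obtain ⟨Kj, hKjr, hKjs⟩ := path_lift G hpw
      refine ⟨Kj, hKjr, ?_, ?_⟩
      · rw [hε1, hKjs j, Pi.single_eq_same, hwoff j hjY]; norm_num
      · intro j' hj' hne
        rw [hKjs j', single_apply_ne hne, hwoff j' hj']; ring
  choose Kf hKf1 hKf2 hKf3 using hKj
  set P : List ((ι → ℝ) × (ι → ℝ)) := YJ.attach.toList.flatMap (fun x => Kf x.1 x.2)
    with hPdef
  have hPr : ∀ r ∈ P, r ∈ G.reactions := by
    intro r hr
    rw [hPdef] at hr
    obtain ⟨x, -, hrx⟩ := List.mem_flatMap.1 hr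
    exact hKf1 x.1 x.2 r hrx
  have hPj : ∀ j, ∀ hj : j ∈ YJ, IRsum P j = IRsum (Kf j hj) j := by
    intro j hj
    rw [hPdef, IRsum_bind]
    apply list_sum_eq_single _ _ (⟨j, hj⟩ : {x // x ∈ YJ})
    · rw [Finset.mem_toList]; exact Finset.mem_attach _ _
    · exact Finset.nodup_toList _
    · intro b _ hb
      have hbj : j ≠ b.1 := fun h => hb (Subtype.ext h.symm)
      exact hKf3 b.1 b.2 j (Finset.mem_filter.1 hj).1 hbj
  have hNex : ∀ i ∈ G'.species, ∃ n : ℕ, ∀ m : ℕ, n ≤ m → i ∈ T' →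
      0 < ε * ((m : ℝ) * IRsum K i + IRsum P i) := by
    intro i hi
    by_cases hiT' : i ∈ T'
    · have hposK : 0 < ε * IRsum K i := by rw [hKsum i]; exact hdrain' i hiT'
      obtain ⟨n, hn⟩ := exists_nat_gt ((-(ε * IRsum P i)) / (ε * IRsum K i))
      refine ⟨n, fun m hm _ => ?_⟩
      have h1 : (-(ε * IRsum P i)) / (ε * IRsum K i) < (m : ℝ) :=
        lt_of_lt_of_le hn (by exact_mod_cast hm)
      have h2 : -(ε * IRsum P i) < (m : ℝ) * (ε * IRsum K i) := (div_lt_iff₀ hposK).1 h1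
      have h3 : ε * ((m : ℝ) * IRsum K i + IRsum P i) =
          (m : ℝ) * (ε * IRsum K i) + ε * IRsum P i := by ring
      rw [h3]; linarith
    · exact ⟨0, fun m _ h => absurd h hiT'⟩
  choose nf hnf using hNex
  set N : ℕ := G'.species.attach.sup (fun x => nf x.1 x.2) with hNdef
  refine ⟨T, hsiphT, (List.replicate N K).flatten ++ P, ?_, ?_⟩
  · intro r hr
    rcases List.mem_append.1 hr with hr | hr
    · obtain ⟨l, hl, hrl⟩ := List.mem_flatten.1 hr
      rw [(List.mem_replicate.1 hl).2] at hrl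
      exact hK r hrl
    · exact hPr r hr
  · intro i hiT
    have hsum : IRsum ((List.replicate N K).flatten ++ P) i =
        (N : ℝ) * IRsum K i + IRsum P i := by
      rw [IRsum_append, IRsum_join_replicate]
    rw [hsum]
    rcases hiT with hiT' | hiYT
    · have hisp : i ∈ G'.species := Finset.mem_coe.1 (hT'sub hiT')
      refine hnf i hisp N ?_ hiT'
      exact Finset.le_sup (f := fun x : {x // x ∈ G'.species} => nf x.1 x.2)
        (Finset.mem_attach _ (⟨i, hisp⟩ : {x // x ∈ G'.species}))
    · have hiYJ : i ∈ YJ := Finset.mem_filter.2 ⟨hiYT.1, hiYT⟩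
      rw [hKY i hiYT.1, hPj i hiYJ, mul_zero, zero_add]
      exact hKf2 i hiYJ

end IRAux4
section IRAux5
set_option linter.unusedSectionVars false

variable {ι : Type} [DecidableEq ι]

lemma IRmain (G G' : RN ι) (Y : Finset ι)
    (hY : G.IsIntermediateSet Y) (hred : G.IsIntermediateReduction Y G')
    (ε : ℝ) (hε : ε = 1 ∨ ε = -1) :
    (∀ T : Set ι, G.IsSiphon T →
      ¬ ∃ L, (∀ r ∈ L, r ∈ G.reactions) ∧ ∀ i ∈ T, 0 < ε * IRsum L i) ↔
    (∀ T : Set ι, G'.IsSiphon T →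
      ¬ ∃ L, (∀ r ∈ L, r ∈ G'.reactions) ∧ ∀ i ∈ T, 0 < ε * IRsum L i) := by
  constructor
  · rintro hG T' hs' ⟨L', h1, h2⟩
    obtain ⟨T, hT, M, hM1, hM2⟩ := IRtoOriginal G G' Y T' ε hY hred hε hs' L' h1 h2
    exact hG T hT ⟨M, hM1, hM2⟩
  · rintro hG' T hs ⟨L, h1, h2⟩
    obtain ⟨T', hT', M', hM1, hM2⟩ := IRtoReduced G G' Y T ε hY hred hε hs L h1 h2
    exact hG' T' hT' ⟨M', hM1, hM2⟩

lemma IRdrain_iff (H : RN ι) (T : Set ι) (hs : H.IsSiphon T) :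
    H.Drainable T ↔
      ∃ L, (∀ r ∈ L, r ∈ H.reactions) ∧ ∀ i ∈ T, 0 < (-1 : ℝ) * IRsum L i := by
  constructor
  · rintro ⟨-, -, L, h1, h2⟩
    refine ⟨L, h1, fun i hi => ?_⟩
    have h3 := h2 i hi
    rw [← IRsum_def] at h3
    linarith
  · rintro ⟨L, h1, h2⟩
    refine ⟨hs.1, hs.2.1, L, h1, fun i hi => ?_⟩
    have h3 := h2 i hi
    rw [← IRsum_def]
    linarith

lemma IRselfrep_iff (H : RN ι) (T : Set ι) (hs : H.IsSiphon T) :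
    H.SelfReplicable T ↔
      ∃ L, (∀ r ∈ L, r ∈ H.reactions) ∧ ∀ i ∈ T, 0 < (1 : ℝ) * IRsum L i := by
  constructor
  · rintro ⟨-, -, L, h1, h2⟩
    refine ⟨L, h1, fun i hi => ?_⟩
    have h3 := h2 i hi
    rw [← IRsum_def] at h3
    linarith
  · rintro ⟨L, h1, h2⟩
    refine ⟨hs.1, hs.2.1, L, h1, fun i hi => ?_⟩
    have h3 := h2 i hi
    rw [← IRsum_def]
    linarith

end IRAux5

/-- Theorem 1(i): if `G'` is obtained from `G` by removal of a set of
intermediates `Y`, then `G` has no drainable (respectively, self-replicable)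
siphons if and only if `G'` has no drainable (respectively, self-replicable)
siphons. -/
theorem no_drainable_selfReplicable_siphons_iff_of_intermediate_removal
    {ι : Type} [DecidableEq ι] (G G' : RN ι) (Y : Finset ι)
    (hY : G.IsIntermediateSet Y) (hred : G.IsIntermediateReduction Y G') :
    ((∀ T : Set ι, G.IsSiphon T → ¬ G.Drainable T) ↔
      (∀ T : Set ι, G'.IsSiphon T → ¬ G'.Drainable T)) ∧
    ((∀ T : Set ι, G.IsSiphon T → ¬ G.SelfReplicable T) ↔
      (∀ T : Set ι, G'.IsSiphon T → ¬ G'.SelfReplicable T)) := by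
  have h1 := IRmain G G' Y hY hred (-1) (Or.inr rfl)
  have h2 := IRmain G G' Y hY hred 1 (Or.inl rfl)
  constructor
  · constructor
    · intro hG T' hs'
      rw [IRdrain_iff G' T' hs']
      refine h1.1 (fun T hs => ?_) T' hs'
      rw [← IRdrain_iff G T hs]
      exact hG T hs
    · intro hG' T hs
      rw [IRdrain_iff G T hs]
      refine h1.2 (fun T' hs' => ?_) T hs
      rw [← IRdrain_iff G' T' hs']
      exact hG' T' hs'
  · constructor
    · intro hG T' hs'
      rw [IRselfrep_iff G' T' hs']
      refine h2.1 (fun T hs => ?_) T' hs'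
      rw [← IRselfrep_iff G T hs]
      exact hG T hs
    · intro hG' T hs
      rw [IRselfrep_iff G T hs]
      refine h2.2 (fun T' hs' => ?_) T hs
      rw [← IRselfrep_iff G' T' hs']
      exact hG' T' hs'
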